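/- With notation as in the twisted model: E_i^{ℓ,k} = E_i^{ℓ,i*k} = −E_i^{ℓ,j*k} = −E_i^{ℓ,i*j*k}, and F_i^{ℓ,k} does not depend on the choice of k ∉ ℓ (i.e. F_i^{ℓ,k} = F_i^{ℓ,k'} for all k, k' ∉ ℓ). -/

import Mathlib

noncomputable section

/-- Offset function for the octonion multiplication table: for distinct indices
`i, j` (in `ZMod 7`) with `d = j - i`, `eᵢ eⱼ = ± e_{i + octOff d}`.
It encodes the rules `eᵢe_{i+1} = e_{i+3}`, `e_{i+1}e_{i+3} = eᵢ`,
`e_{i+3}eᵢ = e_{i+1}` (indices modulo 7). -/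
def octOff : ZMod 7 → ZMod 7 := fun d =>
  if d = 1 then 3 else if d = 2 then 6 else if d = 3 then 1
  else if d = 4 then 5 else if d = 5 then 4 else if d = 6 then 2 else 0

/-- Sign in `eᵢ eⱼ = octSgn (j - i) • e_{i*j}` for distinct `i, j`. -/
def octSgn : ZMod 7 → ℝ := fun d => if d = 1 ∨ d = 2 ∨ d = 4 then 1 else -1

/-- The real octonion division algebra: a scalar part and seven imaginary
coordinates (indexed by `ZMod 7`; index `i` stands for the unit `eᵢ`,
with `e₀ = e₇`). -/
def Oct : Type := ℝ × (ZMod 7 → ℝ)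

instance : AddCommGroup Oct := inferInstanceAs (AddCommGroup (ℝ × (ZMod 7 → ℝ)))
instance : Module ℝ Oct := inferInstanceAs (Module ℝ (ℝ × (ZMod 7 → ℝ)))

/-- View an octonion as a pair. -/
def oc (x : Oct) : ℝ × (ZMod 7 → ℝ) := x
/-- Build an octonion from a pair. -/
def om (p : ℝ × (ZMod 7 → ℝ)) : Oct := p

/-- The octonion multiplication: `e₀ = 1` is the unit, `eᵢ² = -1` and
`eᵢe_{i+1} = e_{i+3} = -e_{i+1}eᵢ` for the imaginary units (indices mod 7). -/
instance : Mul Oct :=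
  ⟨fun x y => om
    ((oc x).1 * (oc y).1 - ∑ i : ZMod 7, (oc x).2 i * (oc y).2 i,
     fun k => (oc x).1 * (oc y).2 k + (oc y).1 * (oc x).2 k +
       ∑ i : ZMod 7, ∑ j : ZMod 7,
         (if i ≠ j ∧ k = i + octOff (j - i) then octSgn (j - i) else 0)
           * (oc x).2 i * (oc y).2 j)⟩

instance : One Oct := ⟨om (1, 0)⟩

/-- The imaginary basis units `eᵢ`, `i ∈ ZMod 7` (`e₀ = e₇`). -/
def e (i : ZMod 7) : Oct := om (0, Pi.single i 1)

/-- For distinct `i, j`, `idx i j = i*j` is the index with `gᵢ + gⱼ = g_{i*j}`,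
i.e. `eᵢeⱼ = ± e_{idx i j}`. -/
def idx (i j : ZMod 7) : ZMod 7 := i + octOff (j - i)

/-- A linear endomorphism of the octonions is a derivation. -/
def IsOctDer (d : Oct →ₗ[ℝ] Oct) : Prop := ∀ x y : Oct, d (x * y) = d x * y + x * d y

/-- The quaternion subalgebra `Q_ℓ = ⟨1, eᵢ, eⱼ, e_{i*j}⟩` attached to the
Fano line `ℓ = {i, j, i*j}`. -/
def Qline (i j : ZMod 7) : Submodule ℝ Oct :=
  Submodule.span ℝ ({1, e i, e j, e (idx i j)} : Set Oct)

/-- `isE i k Q E` says that `E = E_i^{ℓ,k}` : `E(q) = 0` and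
`E(q·e_k) = (1/2)(eᵢq)e_k` for all `q ∈ Q = Q_ℓ`. -/
def isE (i k : ZMod 7) (Q : Submodule ℝ Oct) (E : Oct →ₗ[ℝ] Oct) : Prop :=
  ∀ q ∈ Q, E q = 0 ∧ E (q * e k) = (1/2 : ℝ) • ((e i * q) * e k)

/-- `isF i k Q F` says that `F = F_i^{ℓ,k}` : `F(q) = (1/2)[eᵢ, q]` and
`F(q·e_k) = −(1/2)(q·eᵢ)e_k` for all `q ∈ Q = Q_ℓ`. -/
def isF (i k : ZMod 7) (Q : Submodule ℝ Oct) (F : Oct →ₗ[ℝ] Oct) : Prop :=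
  ∀ q ∈ Q, F q = (1/2 : ℝ) • (e i * q - q * e i) ∧
    F (q * e k) = -((1/2 : ℝ) • ((q * e i) * e k))

end

noncomputable section
namespace Aux

lemma oct_ext {x y : Oct} (h1 : (oc x).1 = (oc y).1) (h2 : ∀ k, (oc x).2 k = (oc y).2 k) : x = y :=
  Prod.ext h1 (funext h2)

lemma oc_mul_fst (x y : Oct) : (oc (x * y)).1 = (oc x).1 * (oc y).1 - ∑ i : ZMod 7, (oc x).2 i * (oc y).2 i := rfl
lemma oc_mul_snd (x y : Oct) (k : ZMod 7) : (oc (x * y)).2 k =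
    (oc x).1 * (oc y).2 k + (oc y).1 * (oc x).2 k +
      ∑ i : ZMod 7, ∑ j : ZMod 7,
        (if i ≠ j ∧ k = i + octOff (j - i) then octSgn (j - i) else 0)
          * (oc x).2 i * (oc y).2 j := rfl
lemma oc_smul_fst (c : ℝ) (x : Oct) : (oc (c • x)).1 = c * (oc x).1 := rfl
lemma oc_smul_snd (c : ℝ) (x : Oct) (k : ZMod 7) : (oc (c • x)).2 k = c * (oc x).2 k := rfl
lemma oc_neg_fst (x : Oct) : (oc (-x)).1 = -(oc x).1 := rfl
lemma oc_neg_snd (x : Oct) (k : ZMod 7) : (oc (-x)).2 k = -(oc x).2 k := rfl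
lemma oc_add_fst (x y : Oct) : (oc (x + y)).1 = (oc x).1 + (oc y).1 := rfl
lemma oc_add_snd (x y : Oct) (k : ZMod 7) : (oc (x + y)).2 k = (oc x).2 k + (oc y).2 k := rfl
lemma oc_one_fst : (oc 1).1 = 1 := rfl
lemma oc_one_snd (k : ZMod 7) : (oc 1).2 k = 0 := rfl
lemma oc_e_fst (a : ZMod 7) : (oc (e a)).1 = 0 := rfl
lemma oc_e_snd (a k : ZMod 7) : (oc (e a)).2 k = Pi.single (M := fun _ : ZMod 7 => ℝ) a 1 k := rfl
lemma oc_sum {s : Finset (ZMod 7)} {f : ZMod 7 → Oct} :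
    oc (∑ l ∈ s, f l) = ∑ l ∈ s, oc (f l) := rfl

lemma oneMul (x : Oct) : 1 * x = x := by
  apply oct_ext <;> simp [oc_mul_fst, oc_mul_snd, oc_one_fst, oc_one_snd]

lemma mulOne (x : Oct) : x * 1 = x := by
  apply oct_ext <;> simp [oc_mul_fst, oc_mul_snd, oc_one_fst, oc_one_snd]

lemma smulMul (c : ℝ) (x y : Oct) : (c • x) * y = c • (x * y) := by
  apply oct_ext
  · simp [oc_mul_fst, oc_smul_fst, oc_smul_snd, Finset.mul_sum, mul_sub, mul_assoc]
  · intro k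
    simp only [oc_mul_snd, oc_smul_fst, oc_smul_snd, Finset.mul_sum, mul_add]
    congr 1
    · ring
    · refine Finset.sum_congr rfl fun i _ => Finset.sum_congr rfl fun l _ => by ring

end Aux
end

noncomputable section
namespace Aux2
open Aux

lemma mulSmul (c : ℝ) (x y : Oct) : x * (c • y) = c • (x * y) := by
  apply oct_ext
  · simp only [oc_mul_fst, oc_smul_fst, oc_smul_snd, mul_sub, Finset.mul_sum]
    congr 1
    · ring
    · refine Finset.sum_congr rfl fun i _ => by ring
  · intro k
    simp only [oc_mul_snd, oc_smul_fst, oc_smul_snd, Finset.mul_sum, mul_add]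
    congr 1
    · ring
    · refine Finset.sum_congr rfl fun i _ => Finset.sum_congr rfl fun l _ => by ring

lemma e_mul_self (a : ZMod 7) : e a * e a = -1 := by
  apply oct_ext
  · simp [oc_mul_fst, oc_e_fst, oc_e_snd, oc_neg_fst, oc_one_fst, Pi.single_apply]
  · intro k
    simp [oc_mul_snd, oc_e_fst, oc_e_snd, oc_neg_snd, oc_one_snd, Pi.single_apply,
      mul_ite, ite_mul, zero_mul, mul_zero, mul_one]

lemma e_mul_e {a b : ZMod 7} (h : a ≠ b) : e a * e b = octSgn (b - a) • e (idx a b) := by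
  apply oct_ext
  · simp [oc_mul_fst, oc_e_fst, oc_e_snd, oc_smul_fst, Pi.single_apply, h, Ne.symm h]
  · intro k
    simp [oc_mul_snd, oc_e_fst, oc_e_snd, oc_smul_snd, Pi.single_apply,
      mul_ite, ite_mul, zero_mul, mul_zero, mul_one, h, Ne.symm h, idx]

lemma neg_one_eq : (-1 : Oct) = (-1 : ℝ) • 1 := by
  apply oct_ext <;> simp [oc_neg_fst, oc_neg_snd, oc_one_fst, oc_one_snd, oc_smul_fst, oc_smul_snd]

lemma negOneMul (x : Oct) : (-1 : Oct) * x = -x := by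
  rw [neg_one_eq, smulMul, oneMul, neg_one_smul]

lemma oct_decomp (x : Oct) : x = (oc x).1 • (1 : Oct) + ∑ l : ZMod 7, (oc x).2 l • e l := by
  apply oct_ext
  · simp [oc_add_fst, oc_smul_fst, oc_one_fst, oc_sum, Prod.fst_sum, oc_e_fst]
  · intro k
    simp [oc_add_snd, oc_smul_snd, oc_one_snd, oc_sum, Prod.snd_sum, oc_e_snd,
      Pi.single_apply, Finset.sum_apply]

lemma lin_ext {A B : Oct →ₗ[ℝ] Oct} (h1 : A 1 = B 1) (he : ∀ l, A (e l) = B (e l)) : A = B := by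
  ext x
  rw [oct_decomp x, map_add, map_add, map_smul, map_smul, h1, map_sum, map_sum]
  simp only [map_smul, he]

end Aux2
end

noncomputable section
namespace Aux3
open Aux Aux2

def sgnZ : ZMod 7 → ℤ := fun d => if d = 1 ∨ d = 2 ∨ d = 4 then 1 else -1

lemma octSgn_eq (d : ZMod 7) : octSgn d = ((sgnZ d : ℤ) : ℝ) := by
  unfold octSgn sgnZ; split_ifs <;> norm_num

lemma octSgn_mul_self (d : ZMod 7) : octSgn d * octSgn d = 1 := by
  unfold octSgn; split_ifs <;> norm_num

def NotLine (i j m : ZMod 7) : Prop := m ≠ i ∧ m ≠ j ∧ m ≠ idx i j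

instance (i j m : ZMod 7) : Decidable (NotLine i j m) :=
  inferInstanceAs (Decidable (m ≠ i ∧ m ≠ j ∧ m ≠ idx i j))

def eSgn (i k m : ZMod 7) : ℤ :=
  if m = k then sgnZ (k - i)
  else if idx k m = i then -sgnZ (k - i)
  else sgnZ (k - idx k m) * sgnZ (idx k m - i) * sgnZ (k - idx i (idx k m))

def eIdx (i k m : ZMod 7) : ZMod 7 :=
  if m = k then idx i k
  else if idx k m = i then k
  else idx (idx i (idx k m)) k

def fSgn (i k m : ZMod 7) : ℤ :=
  if m = k then -sgnZ (k - i)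
  else if idx k m = i then sgnZ (k - i)
  else -(sgnZ (k - idx k m) * sgnZ (i - idx k m) * sgnZ (k - idx (idx k m) i))

def fIdx (i k m : ZMod 7) : ZMod 7 :=
  if m = k then idx i k
  else if idx k m = i then k
  else idx (idx (idx k m) i) k

-- basic fano facts used in E_val / F_val
lemma factA : ∀ i j k m : ZMod 7, (i ≠ j ∧ NotLine i j k ∧ NotLine i j m ∧ m ≠ k ∧
    idx k m = i) → m = idx i k := by decide

lemma factB : ∀ i j k m : ZMod 7, (i ≠ j ∧ NotLine i j k ∧ NotLine i j m ∧ m ≠ k ∧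
    idx k m ≠ i) → ((idx k m = j ∨ idx k m = idx i j) ∧ idx k m ≠ k ∧ idx (idx k m) k = m ∧
      idx i (idx k m) ≠ k ∧ idx (idx k m) i ≠ k) := by decide

lemma factC : ∀ i j k : ZMod 7, (i ≠ j ∧ NotLine i j k) →
    NotLine i j (idx i k) ∧ NotLine i j (idx j k) ∧ NotLine i j (idx (idx i j) k) := by decide

lemma identE2 : ∀ i j k m : ZMod 7, (i ≠ j ∧ NotLine i j k ∧ NotLine i j m) →
    eSgn i (idx i k) m = eSgn i k m ∧ eIdx i (idx i k) m = eIdx i k m := by decide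

lemma identE3 : ∀ i j k m : ZMod 7, (i ≠ j ∧ NotLine i j k ∧ NotLine i j m) →
    eSgn i (idx j k) m = -eSgn i k m ∧ eIdx i (idx j k) m = eIdx i k m := by decide

lemma identE4 : ∀ i j k m : ZMod 7, (i ≠ j ∧ NotLine i j k ∧ NotLine i j m) →
    eSgn i (idx (idx i j) k) m = -eSgn i k m ∧ eIdx i (idx (idx i j) k) m = eIdx i k m := by decide

lemma identF : ∀ i j k m : ZMod 7, (i ≠ j ∧ NotLine i j k ∧ NotLine i j m) →
    fSgn i k m = sgnZ (i - m) ∧ fIdx i k m = idx m i := by decide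

end Aux3
end

noncomputable section
namespace Aux4
open Aux Aux2 Aux3

lemma one_mem (i j : ZMod 7) : (1 : Oct) ∈ Qline i j :=
  Submodule.subset_span (by simp)
lemma ei_mem (i j : ZMod 7) : e i ∈ Qline i j :=
  Submodule.subset_span (by simp)
lemma ej_mem (i j : ZMod 7) : e j ∈ Qline i j :=
  Submodule.subset_span (by simp)
lemma eij_mem (i j : ZMod 7) : e (idx i j) ∈ Qline i j :=
  Submodule.subset_span (by simp)

lemma mem_line {i j l : ZMod 7} (h : ¬ NotLine i j l) : e l ∈ Qline i j := by
  have hl : l = i ∨ l = j ∨ l = idx i j := by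
    by_contra hcon; push_neg at hcon; exact h ⟨hcon.1, hcon.2.1, hcon.2.2⟩
  rcases hl with rfl | rfl | rfl
  · exact ei_mem _ _
  · exact ej_mem _ _
  · exact eij_mem _ _

lemma E_val {i j k : ZMod 7} (hij : i ≠ j) (hk : NotLine i j k)
    {E : Oct →ₗ[ℝ] Oct} (hE : isE i k (Qline i j) E) (m : ZMod 7) (hm : NotLine i j m) :
    E (e m) = ((eSgn i k m : ℝ) / 2) • e (eIdx i k m) := by
  have hik : i ≠ k := fun h => hk.1 h.symm
  by_cases hmk : m = k
  · subst hmk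
    have h1 := (hE 1 (one_mem i j)).2
    rw [oneMul, mulOne, e_mul_e hik] at h1
    rw [h1]
    simp only [eSgn, eIdx, if_pos rfl, smul_smul]
    congr 1
    rw [octSgn_eq]; push_cast; ring
  · by_cases hai : idx k m = i
    · have hmik : m = idx i k := factA i j k m ⟨hij, hk, hm, hmk, hai⟩
      have h2 := (hE (e i) (ei_mem i j)).2
      rw [e_mul_self, negOneMul, e_mul_e hik, ← hmik, map_smul] at h2
      have h3 := congrArg (fun z => octSgn (k - i) • z) h2
      simp only [smul_smul, octSgn_mul_self, one_smul] at h3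
      rw [h3]
      simp only [eSgn, eIdx, if_neg hmk, if_pos hai]
      simp only [smul_neg, neg_neg, smul_smul]
      rw [← neg_smul]
      congr 1
      rw [octSgn_eq]; push_cast; ring
    · obtain ⟨haj, hak, hakm, hiak, haik⟩ := factB i j k m ⟨hij, hk, hm, hmk, hai⟩
      have hQ : e (idx k m) ∈ Qline i j := by
        rcases haj with h | h <;> rw [h]
        · exact ej_mem i j
        · exact eij_mem i j
      have hia : i ≠ idx k m := fun h => hai h.symm
      have h2 := (hE (e (idx k m)) hQ).2
      rw [e_mul_e hak, hakm, map_smul, e_mul_e hia, smulMul, e_mul_e hiak] at h2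
      have h3 := congrArg (fun z => octSgn (k - idx k m) • z) h2
      simp only [smul_smul, octSgn_mul_self, one_smul] at h3
      rw [h3]
      simp only [eSgn, eIdx, if_neg hmk, if_neg hai]
      congr 1
      rw [octSgn_eq, octSgn_eq, octSgn_eq]; push_cast; ring

lemma F_val {i j k : ZMod 7} (hij : i ≠ j) (hk : NotLine i j k)
    {F : Oct →ₗ[ℝ] Oct} (hF : isF i k (Qline i j) F) (m : ZMod 7) (hm : NotLine i j m) :
    F (e m) = ((sgnZ (i - m) : ℝ) / 2) • e (idx m i) := by
  obtain ⟨hfs, hfi⟩ := identF i j k m ⟨hij, hk, hm⟩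
  rw [← hfs, ← hfi]
  have hik : i ≠ k := fun h => hk.1 h.symm
  by_cases hmk : m = k
  · subst hmk
    have h1 := (hF 1 (one_mem i j)).2
    rw [oneMul, oneMul, e_mul_e hik] at h1
    rw [h1]
    simp only [fSgn, fIdx, if_pos rfl]
    rw [smul_smul, ← neg_smul]
    congr 1
    rw [octSgn_eq]; push_cast; ring
  · by_cases hai : idx k m = i
    · have hmik : m = idx i k := factA i j k m ⟨hij, hk, hm, hmk, hai⟩
      have h2 := (hF (e i) (ei_mem i j)).2
      rw [e_mul_self, negOneMul, e_mul_e hik, ← hmik, map_smul] at h2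
      have h3 := congrArg (fun z => octSgn (k - i) • z) h2
      simp only [smul_smul, octSgn_mul_self, one_smul] at h3
      rw [h3]
      simp only [fSgn, fIdx, if_neg hmk, if_pos hai]
      simp only [smul_neg, neg_neg, smul_smul]
      congr 1
      rw [octSgn_eq]; ring
    · obtain ⟨haj, hak, hakm, hiak, haik⟩ := factB i j k m ⟨hij, hk, hm, hmk, hai⟩
      have hQ : e (idx k m) ∈ Qline i j := by
        rcases haj with h | h <;> rw [h]
        · exact ej_mem i j
        · exact eij_mem i j
      have hia : idx k m ≠ i := hai
      have h2 := (hF (e (idx k m)) hQ).2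
      rw [e_mul_e hak, hakm, map_smul, e_mul_e hia, smulMul, e_mul_e haik] at h2
      have h3 := congrArg (fun z => octSgn (k - idx k m) • z) h2
      simp only [smul_neg, smul_smul, octSgn_mul_self, one_smul] at h3
      rw [h3]
      simp only [fSgn, fIdx, if_neg hmk, if_neg hai]
      rw [← neg_smul]
      congr 1
      rw [octSgn_eq, octSgn_eq, octSgn_eq]; push_cast; ring

end Aux4
end

/-- with `ℓ = {i, j, i*j}` a Fano line and `k, k' ∉ ℓ`:
`E_i^{ℓ,k} = E_i^{ℓ,i*k} = −E_i^{ℓ,j*k} = −E_i^{ℓ,i*j*k}`, while `F_i^{ℓ,k}`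
does not depend on the choice of `k ∉ ℓ`. -/
theorem stmt8 : ∀ i j k k' : ZMod 7, i ≠ j →
    k ∉ ({i, j, idx i j} : Set (ZMod 7)) → k' ∉ ({i, j, idx i j} : Set (ZMod 7)) →
    ∀ E E₂ E₃ E₄ F F' : Oct →ₗ[ℝ] Oct,
      isE i k (Qline i j) E →
      isE i (idx i k) (Qline i j) E₂ →
      isE i (idx j k) (Qline i j) E₃ →
      isE i (idx (idx i j) k) (Qline i j) E₄ →
      isF i k (Qline i j) F →
      isF i k' (Qline i j) F' →
      E = E₂ ∧ E = -E₃ ∧ E = -E₄ ∧ F = F' := by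
  open Aux Aux2 Aux3 Aux4 in
  intro i j k k' hij hkS hk'S E E₂ E₃ E₄ F F' hE hE2 hE3 hE4 hF hF'
  have hk : Aux3.NotLine i j k := by
    simp only [Set.mem_insert_iff, Set.mem_singleton_iff] at hkS
    push_neg at hkS
    exact ⟨hkS.1, hkS.2.1, hkS.2.2⟩
  have hk' : Aux3.NotLine i j k' := by
    simp only [Set.mem_insert_iff, Set.mem_singleton_iff] at hk'S
    push_neg at hk'S
    exact ⟨hk'S.1, hk'S.2.1, hk'S.2.2⟩
  obtain ⟨hk2, hk3, hk4⟩ := factC i j k ⟨hij, hk⟩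
  refine ⟨?_, ?_, ?_, ?_⟩
  · apply lin_ext
    · rw [(hE 1 (one_mem i j)).1, (hE2 1 (one_mem i j)).1]
    · intro l
      by_cases hl : Aux3.NotLine i j l
      · rw [E_val hij hk hE l hl, E_val hij hk2 hE2 l hl]
        obtain ⟨hs, hi2⟩ := identE2 i j k l ⟨hij, hk, hl⟩
        rw [hs, hi2]
      · rw [(hE (e l) (mem_line hl)).1, (hE2 (e l) (mem_line hl)).1]
  · apply lin_ext
    · rw [LinearMap.neg_apply, (hE 1 (one_mem i j)).1, (hE3 1 (one_mem i j)).1, neg_zero]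
    · intro l
      rw [LinearMap.neg_apply]
      by_cases hl : Aux3.NotLine i j l
      · rw [E_val hij hk hE l hl, E_val hij hk3 hE3 l hl]
        obtain ⟨hs, hi3⟩ := identE3 i j k l ⟨hij, hk, hl⟩
        rw [hs, hi3]
        push_cast
        rw [neg_div, neg_smul, neg_neg]
      · rw [(hE (e l) (mem_line hl)).1, (hE3 (e l) (mem_line hl)).1, neg_zero]
  · apply lin_ext
    · rw [LinearMap.neg_apply, (hE 1 (one_mem i j)).1, (hE4 1 (one_mem i j)).1, neg_zero]
    · intro l
      rw [LinearMap.neg_apply]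
      by_cases hl : Aux3.NotLine i j l
      · rw [E_val hij hk hE l hl, E_val hij hk4 hE4 l hl]
        obtain ⟨hs, hi4⟩ := identE4 i j k l ⟨hij, hk, hl⟩
        rw [hs, hi4]
        push_cast
        rw [neg_div, neg_smul, neg_neg]
      · rw [(hE (e l) (mem_line hl)).1, (hE4 (e l) (mem_line hl)).1, neg_zero]
  · apply lin_ext
    · rw [(hF 1 (one_mem i j)).1, (hF' 1 (one_mem i j)).1]
    · intro l
      by_cases hl : Aux3.NotLine i j l
      · rw [F_val hij hk hF l hl, F_val hij hk' hF' l hl]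
      · rw [(hF (e l) (mem_line hl)).1, (hF' (e l) (mem_line hl)).1]
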